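/- Let A be a commutative Noetherian ring and let I be an ideal of A containing a nonzerodivisor of A. Then Ext^1_A(A/I, A) = 0 if and only if (A : I) = A. -/

import Mathlib

set_option maxHeartbeats 1000000
set_option synthInstance.maxHeartbeats 400000

open CategoryTheory

universe u

/-- The `i`-th Ext module `Ext_A^i(M, N)` over a commutative ring `A`. -/
noncomputable def ExtModule (A : Type u) [CommRing A] (M N : Type u)
    [AddCommGroup M] [Module A M] [AddCommGroup N] [Module A N] (i : ℕ) : ModuleCat.{u} A :=
  ((Ext A (ModuleCat.{u} A) i).obj (Opposite.op (ModuleCat.of A M))).obj (ModuleCat.of A N)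

/-- A module is torsion-free if nonzerodivisors of the ring act injectively. -/
def IsTorsionFreeModule (A : Type*) [CommRing A] (M : Type*) [AddCommGroup M]
    [Module A M] : Prop :=
  ∀ a ∈ nonZeroDivisors A, ∀ m : M, a • m = 0 → m = 0

/-- The grade of an ideal `J`: the length of a maximal regular sequence contained in `J`. -/
noncomputable def Ideal.grade {A : Type*} [CommRing A] (J : Ideal A) : ℕ∞ :=
  sSup {n : ℕ∞ | ∃ rs : List A, (rs.length : ℕ∞) = n ∧ (∀ r ∈ rs, r ∈ J) ∧
    RingTheory.Sequence.IsWeaklyRegular A rs}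

/-- A Cohen–Macaulay local ring: Noetherian local with depth equal to Krull dimension. -/
def IsCohenMacaulayLocalRing (A : Type*) [CommRing A] : Prop :=
  IsNoetherianRing A ∧ ∃ _ : IsLocalRing A,
    ((IsLocalRing.maximalIdeal A).grade : WithBot ℕ∞) = ringKrullDim A

/-- A Cohen–Macaulay ring: Noetherian, all localizations at primes are CM local rings. -/
def IsCohenMacaulayRing (A : Type*) [CommRing A] : Prop :=
  IsNoetherianRing A ∧ ∀ (p : Ideal A) [p.IsPrime],
    IsCohenMacaulayLocalRing (Localization.AtPrime p)

/-- A Gorenstein local ring: Noetherian local of finite self-injective dimension,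
expressed via vanishing of `Ext^{n+1}(A/I, A)` for all ideals `I` (Baer's criterion). -/
def IsGorensteinLocalRing (A : Type u) [CommRing A] : Prop :=
  IsLocalRing A ∧ IsNoetherianRing A ∧
    ∃ n : ℕ, ∀ I : Ideal A, Subsingleton (ExtModule A (A ⧸ I) A (n + 1))

/-- A Gorenstein ring: Noetherian, all localizations at maximal ideals are Gorenstein local. -/
def IsGorensteinRing (A : Type u) [CommRing A] : Prop :=
  IsNoetherianRing A ∧ ∀ (m : Ideal A) [m.IsMaximal],
    IsGorensteinLocalRing (Localization.AtPrime m)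

/-- Generically Gorenstein: the localization at every associated prime is Gorenstein. -/
def IsGenericallyGorenstein (A : Type u) [CommRing A] : Prop :=
  ∀ (p : Ideal A) [p.IsPrime], p ∈ associatedPrimes A A →
    IsGorensteinLocalRing (Localization.AtPrime p)

/-- The trace ideal of a module: the sum of the images of all linear maps to the ring. -/
def traceIdeal (A : Type*) [CommRing A] (M : Type*) [AddCommGroup M] [Module A M] :
    Ideal A :=
  ⨆ f : M →ₗ[A] A, LinearMap.range f

/-- The image of an ideal inside the total ring of fractions. -/
noncomputable def Ideal.toFrac {A : Type u} [CommRing A] (I : Ideal A) :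
    Submodule A (FractionRing A) :=
  Submodule.map (Algebra.linearMap A (FractionRing A)) I

/-- The conductor `(R : S)` of a birational extension `R ⊆ S ⊆ Q(R)`,
as a submodule of the total ring of fractions. -/
noncomputable def conductorFrac (R : Type u) [CommRing R]
    (S : Subalgebra R (FractionRing R)) : Submodule R (FractionRing R) :=
  (1 : Submodule R (FractionRing R)) / Subalgebra.toSubmodule S

/-- `M ∈ Ω CM(A)`: there is an exact sequence `0 → M → P → N → 0` with `P` a finitely
generated projective `A`-module and `N` a finitely generated torsion-free
(equivalently, over a 1-dimensional CM ring, maximal Cohen–Macaulay) `A`-module. -/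
def InSyzygyOfCM (A : Type u) [CommRing A] (M : Type u) [AddCommGroup M] [Module A M] :
    Prop :=
  ∃ (P N : Type u) (_ : AddCommGroup P) (_ : Module A P) (_ : AddCommGroup N)
    (_ : Module A N), Module.Projective A P ∧ Module.Finite A P ∧ Module.Finite A N ∧
      IsTorsionFreeModule A N ∧
      ∃ (f : M →ₗ[A] P) (g : P →ₗ[A] N),
        Function.Injective f ∧ Function.Surjective g ∧ LinearMap.range f = LinearMap.ker g


namespace ExtColonAux

open CategoryTheory CategoryTheory.Limits

universe v

lemma ext_aux {A : Type v} [CommRing A] {P₁ P₂ : Type*} [AddCommGroup P₁] [Module A P₁]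
    [AddCommGroup P₂] [Module A P₂]
    (I : Ideal A) (d1 : P₁ →ₗ[A] A) (d2 : P₂ →ₗ[A] P₁)
    (h1 : LinearMap.range d1 = I) (h2 : LinearMap.range d2 = LinearMap.ker d1) :
    (∀ g : P₁ →ₗ[A] A, g ∘ₗ d2 = 0 → ∃ h : A →ₗ[A] A, h ∘ₗ d1 = g) ↔
      (∀ f : ↥I →ₗ[A] A, ∃ a : A, ∀ x : I, f x = a * x) := by
  constructor
  · intro H f
    set g : P₁ →ₗ[A] A :=
      f ∘ₗ (LinearEquiv.ofEq _ _ h1).toLinearMap ∘ₗ d1.rangeRestrict with hg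
    have hg0 : g ∘ₗ d2 = 0 := by
      ext x
      have hx : d2 x ∈ LinearMap.ker d1 := h2 ▸ LinearMap.mem_range_self d2 x
      have : d1.rangeRestrict (d2 x) = 0 := Subtype.ext (by simpa using hx)
      simp [hg, LinearMap.comp_apply, this]
    obtain ⟨h, hh⟩ := H g hg0
    refine ⟨h 1, fun x => ?_⟩
    obtain ⟨y, hy⟩ : (x : A) ∈ LinearMap.range d1 := h1 ▸ x.2
    have e1 : g y = f x := by
      have : ((LinearEquiv.ofEq _ _ h1) (d1.rangeRestrict y)) = x :=
        Subtype.ext (by simpa using hy)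
      simp [hg, LinearMap.comp_apply, this]
    have e2 : h (d1 y) = g y := by rw [← hh]; rfl
    have e3 : h (d1 y) = d1 y * h 1 := by
      conv_lhs => rw [show d1 y = d1 y • (1 : A) by simp]
      rw [map_smul, smul_eq_mul]
    rw [← e1, ← e2, e3, hy, mul_comm]
  · intro H g hg0
    have hker : LinearMap.ker d1 ≤ LinearMap.ker g := by
      intro x hx
      obtain ⟨y, rfl⟩ : x ∈ LinearMap.range d2 := h2.symm ▸ hx
      simpa using LinearMap.congr_fun hg0 y
    set f : ↥I →ₗ[A] A :=
      ((LinearMap.ker d1).liftQ g hker) ∘ₗ d1.quotKerEquivRange.symm.toLinearMap ∘ₗ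
        (LinearEquiv.ofEq I (LinearMap.range d1) h1.symm).toLinearMap with hf
    obtain ⟨a, ha⟩ := H f
    refine ⟨a • LinearMap.id, ?_⟩
    ext y
    have hx : d1 y ∈ I := h1 ▸ LinearMap.mem_range_self d1 y
    have key := ha ⟨d1 y, hx⟩
    have e0 : d1.quotKerEquivRange (Submodule.Quotient.mk y) =
        ⟨d1 y, LinearMap.mem_range_self d1 y⟩ :=
      Subtype.ext (by simp [LinearMap.quotKerEquivRange_apply_mk])
    have e1 : f ⟨d1 y, hx⟩ = g y := by
      have : (LinearEquiv.ofEq I (LinearMap.range d1) h1.symm) ⟨d1 y, hx⟩ =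
          ⟨d1 y, LinearMap.mem_range_self d1 y⟩ := Subtype.ext rfl
      rw [hf]
      simp only [LinearMap.comp_apply, LinearEquiv.coe_toLinearMap, this, ← e0,
        LinearEquiv.symm_apply_apply, Submodule.liftQ_apply]
    simp only [LinearMap.comp_apply, LinearMap.smul_apply, LinearMap.id_apply, smul_eq_mul]
    rw [← e1, key]

lemma colon_aux {A : Type u} [CommRing A] (I : Ideal A)
    (hreg : ∃ a ∈ I, a ∈ nonZeroDivisors A) :
    (∀ f : ↥I →ₗ[A] A, ∃ a : A, ∀ x : I, f x = a * x) ↔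
      (1 : Submodule A (FractionRing A)) / I.toFrac = 1 := by
  set K := FractionRing A
  set alg : A →ₗ[A] K := Algebra.linearMap A K with halg
  have hinj : Function.Injective (algebraMap A K) := IsFractionRing.injective A K
  obtain ⟨s, hsI, hs⟩ := hreg
  have hsunit : IsUnit (algebraMap A K s) :=
    IsLocalization.map_units K (⟨s, hs⟩ : nonZeroDivisors A)
  have hone : ∀ x : K, x ∈ (1 : Submodule A K) ↔ ∃ a : A, algebraMap A K a = x := by
    intro x; rw [Submodule.one_eq_range]; exact Iff.rfl
  have hge : (1 : Submodule A K) ≤ 1 / I.toFrac := by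
    intro x hx
    rw [Submodule.mem_div_iff_forall_mul_mem]
    rintro y ⟨b, hb, rfl⟩
    obtain ⟨a, rfl⟩ := (hone x).1 hx
    exact (hone _).2 ⟨a * b, by simp; rfl⟩
  constructor
  · intro H
    refine le_antisymm (fun x hx => ?_) hge
    rw [Submodule.mem_div_iff_forall_mul_mem] at hx
    have hmem : ∀ y : I, x * algebraMap A K y ∈ LinearMap.range alg := by
      intro y
      have := hx (alg y) ⟨y, y.2, rfl⟩
      rwa [Submodule.one_eq_range] at this
    set g : ↥I →ₗ[A] K := x • (alg ∘ₗ I.subtype) with hgdef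
    have hgmem : ∀ y : I, g y ∈ LinearMap.range alg := by
      intro y; simpa [hgdef, smul_eq_mul, halg] using hmem y
    set f : ↥I →ₗ[A] A :=
      (LinearEquiv.ofInjective alg (by exact hinj)).symm.toLinearMap ∘ₗ
        g.codRestrict (LinearMap.range alg) hgmem with hfdef
    have hfspec : ∀ y : I, algebraMap A K (f y) = x * algebraMap A K y := by
      intro y
      have : alg (f y) = ((LinearEquiv.ofInjective alg (by exact hinj))
          ((LinearEquiv.ofInjective alg (by exact hinj)).symm ⟨g y, hgmem y⟩)) := by
        rfl
      rw [show (algebraMap A K) (f y) = alg (f y) from rfl, this, LinearEquiv.apply_symm_apply]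
      show g y = _
      simp [hgdef, smul_eq_mul]
      rfl
    obtain ⟨a, ha⟩ := H f
    have : x * algebraMap A K s = algebraMap A K a * algebraMap A K s := by
      rw [← hfspec ⟨s, hsI⟩, ha ⟨s, hsI⟩, map_mul, mul_comm]
    have hx' : x = algebraMap A K a := by
      apply hsunit.mul_left_cancel
      rw [mul_comm ((algebraMap A K) s) x, mul_comm ((algebraMap A K) s) ((algebraMap A K) a)]
      exact this
    exact (hone x).2 ⟨a, hx'.symm⟩
  · intro H f
    set x : K := algebraMap A K (f ⟨s, hsI⟩) * (↑hsunit.unit⁻¹ : K) with hxdef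
    have hxy : ∀ y : I, x * algebraMap A K y = algebraMap A K (f y) := by
      intro y
      have swap : f ⟨s, hsI⟩ * y = s * f y := by
        have h1 : ((y : A) • (⟨s, hsI⟩ : I)) = ((s : A) • y : I) := Subtype.ext (by simp [mul_comm])
        have := congrArg f h1
        rw [map_smul, map_smul] at this
        simpa [smul_eq_mul, mul_comm] using this
      calc x * algebraMap A K y
          = algebraMap A K (f ⟨s, hsI⟩ * y) * (↑hsunit.unit⁻¹ : K) := by
            rw [hxdef, map_mul]; ring
        _ = algebraMap A K s * algebraMap A K (f y) * (↑hsunit.unit⁻¹ : K) := by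
            rw [swap, map_mul]
        _ = algebraMap A K (f y) * (algebraMap A K s * (↑hsunit.unit⁻¹ : K)) := by ring
        _ = algebraMap A K (f y) := by rw [IsUnit.mul_val_inv hsunit, mul_one]
    have hxmem : x ∈ (1 : Submodule A K) := by
      rw [← H, Submodule.mem_div_iff_forall_mul_mem]
      rintro y ⟨b, hb, rfl⟩
      exact (hone _).2 ⟨f ⟨b, hb⟩, (hxy ⟨b, hb⟩).symm⟩
    obtain ⟨a, ha⟩ := (hone x).1 hxmem
    refine ⟨a, fun y => hinj ?_⟩
    rw [← hxy y, ← ha, ← map_mul]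

noncomputable section

variable (A : Type u) [CommRing A] (I : Ideal A)

instance : Projective (ModuleCat.of A A) :=
  ModuleCat.projective_of_free (Module.Basis.singleton PUnit.{u+1} A)

def resPi : ModuleCat.of A A ⟶ ModuleCat.of A (A ⧸ I) := ModuleCat.ofHom I.mkQ

instance : Epi (resPi A I) :=
  (ModuleCat.epi_iff_surjective _).2 (Submodule.mkQ_surjective I)

lemma d_comp_self' {X Y : ModuleCat.{u} A} (f : X ⟶ Y) : Projective.d f ≫ f = 0 :=
  (Category.assoc _ _ _).trans (by rw [kernel.condition]; exact comp_zero)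

def resComplex : ChainComplex (ModuleCat.{u} A) ℕ :=
  ChainComplex.mk' (ModuleCat.of A A) (Projective.syzygies (resPi A I))
    (Projective.d (resPi A I)) (fun f => ⟨_, Projective.d f, d_comp_self' A f⟩)

lemma resComplex_d_1_0 :
    (resComplex A I).d 1 0 = Projective.d (resPi A I) := by
  simp [resComplex]

lemma resComplex_exactAt_succ (n : ℕ) :
    (resComplex A I).ExactAt (n + 1) := by
  rw [HomologicalComplex.exactAt_iff' _ (n + 1 + 1) (n + 1) n (by simp) (by simp)]
  refine (ShortComplex.exact_iff_of_iso ?_).2 (exact_d_f ((resComplex A I).d (n + 1) n))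
  exact ShortComplex.isoMk
    (ChainComplex.mk'XIso (ModuleCat.of A A) (Projective.syzygies (resPi A I))
      (Projective.d (resPi A I)) (fun f => ⟨_, Projective.d f, d_comp_self' A f⟩) n)
    (Iso.refl _) (Iso.refl _)
    ((ChainComplex.mk'_d _ _ _ _ n).symm.trans (Category.comp_id _).symm)
    ((Category.id_comp _).trans (Category.comp_id _).symm)

instance (n : ℕ) : Projective ((resComplex A I).X n) := by
  obtain (_ | _ | _ | n) := n
  · exact inferInstanceAs (Projective (ModuleCat.of A A))
  all_goals apply Projective.projective_over

def res : ProjectiveResolution (ModuleCat.of A (A ⧸ I)) where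
  complex := resComplex A I
  π := (ChainComplex.toSingle₀Equiv _ _).symm ⟨resPi A I, by
    rw [resComplex_d_1_0]; exact d_comp_self' A (resPi A I)⟩
  quasiIso := ⟨fun n => by
    cases n
    · rw [ChainComplex.quasiIsoAt₀_iff, ShortComplex.quasiIso_iff_of_zeros']
      · refine (ShortComplex.exact_and_epi_g_iff_of_iso ?_).2
          ⟨exact_d_f (resPi A I), by dsimp; infer_instance⟩
        exact ShortComplex.isoMk (Iso.refl _) (Iso.refl _) (Iso.refl _)
          ((Category.id_comp _).trans (Category.comp_id _).symm)
          ((Category.id_comp _).trans (Category.comp_id _).symm)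
      all_goals rfl
    · rw [quasiIsoAt_iff_exactAt']
      · apply resComplex_exactAt_succ
      · apply ChainComplex.exactAt_succ_single_obj⟩

lemma subsingleton_iff_isZero (M : ModuleCat.{u} A) : Subsingleton M ↔ Limits.IsZero M := by
  constructor
  · intro h; exact ModuleCat.isZero_of_subsingleton M
  · intro h
    refine ⟨fun a b => ?_⟩
    have h0 : (𝟙 M : M ⟶ M).hom = 0 := by rw [h.eq_of_src (𝟙 M) 0]; rfl
    calc a = (𝟙 M : M ⟶ M).hom a := rfl
      _ = (0 : M →ₗ[A] M) a := by rw [h0]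
      _ = (𝟙 M : M ⟶ M).hom b := by rw [h0]; rfl
      _ = b := rfl

lemma main_subsingleton_iff :
    Subsingleton (↥(ExtModule A (A ⧸ I) A 1)) ↔
      (∀ g : ↑((resComplex A I).X 1) →ₗ[A] A,
        g ∘ₗ ((resComplex A I).d 2 1).hom = 0 →
        ∃ h : A →ₗ[A] A,
          h ∘ₗ (((resComplex A I).d 1 0).hom : ↑((resComplex A I).X 1) →ₗ[A] A) = g) := by
  set K := (resComplex A I).linearYonedaObj A (ModuleCat.of A A) with hK
  have e : ExtModule A (A ⧸ I) A 1 ≅ K.homology 1 := (res A I).isoExt 1 (ModuleCat.of A A)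
  rw [show Subsingleton (↥(ExtModule A (A ⧸ I) A 1)) ↔
      Limits.IsZero (ExtModule A (A ⧸ I) A 1) from subsingleton_iff_isZero _ _]
  rw [show Limits.IsZero (ExtModule A (A ⧸ I) A 1) ↔ Limits.IsZero (K.homology 1) from
    ⟨fun h => h.of_iso e.symm, fun h => h.of_iso e⟩]
  rw [← HomologicalComplex.exactAt_iff_isZero_homology]
  rw [HomologicalComplex.exactAt_iff' K 0 1 2 (by simp) (by simp)]
  rw [ShortComplex.moduleCat_exact_iff]
  constructor
  · intro H g hg
    obtain ⟨h, hh⟩ := H (ModuleCat.ofHom g) (ModuleCat.hom_ext hg)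
    exact ⟨h.hom, congrArg ModuleCat.Hom.hom hh⟩
  · intro H x hx
    obtain ⟨h, hh⟩ := H x.hom (congrArg ModuleCat.Hom.hom hx)
    exact ⟨ModuleCat.ofHom h, ModuleCat.hom_ext hh⟩

lemma range_d10 :
    LinearMap.range (((resComplex A I).d 1 0).hom : ↑((resComplex A I).X 1) →ₗ[A] A) = I := by
  have hex := exact_d_f (resPi A I)
  rw [ShortComplex.moduleCat_exact_iff] at hex
  have w : (resComplex A I).d 1 0 ≫ resPi A I = 0 := by
    rw [resComplex_d_1_0]; exact d_comp_self' A (resPi A I)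
  ext x
  constructor
  · rintro ⟨y, rfl⟩
    have := congrArg (fun φ => φ.hom y) w
    have hz : I.mkQ (((resComplex A I).d 1 0).hom y) = 0 := this
    exact (Submodule.Quotient.mk_eq_zero I).1 hz
  · intro hx
    obtain ⟨y, hy⟩ := hex x (by
      show I.mkQ x = 0
      rwa [Submodule.mkQ_apply, Submodule.Quotient.mk_eq_zero])
    exact ⟨y, by rw [resComplex_d_1_0]; exact hy⟩

lemma range_d21 :
    LinearMap.range ((resComplex A I).d 2 1).hom =
      LinearMap.ker (((resComplex A I).d 1 0).hom : ↑((resComplex A I).X 1) →ₗ[A] A) := by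
  have h := resComplex_exactAt_succ A I 0
  rw [HomologicalComplex.exactAt_iff' _ 2 1 0 (by simp) (by simp)] at h
  rw [ShortComplex.moduleCat_exact_iff] at h
  ext x
  constructor
  · rintro ⟨y, rfl⟩
    have := congrArg (fun φ => φ.hom y) ((resComplex A I).d_comp_d 2 1 0)
    exact this
  · intro hx
    exact h x hx

end

end ExtColonAux

/-- `Ext¹_A(A/I, A) = 0` iff `(A : I) = A`, for an ideal `I` containing a
nonzerodivisor of the commutative Noetherian ring `A`. -/
theorem ext_one_vanishes_iff_colon_eq_self (A : Type u) [CommRing A] [IsNoetherianRing A]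
    (I : Ideal A) (hreg : ∃ a ∈ I, a ∈ nonZeroDivisors A) :
    Subsingleton (↥(ExtModule A (A ⧸ I) A 1)) ↔
      (1 : Submodule A (FractionRing A)) / I.toFrac = 1 := by
  rw [ExtColonAux.main_subsingleton_iff A I,
    ExtColonAux.ext_aux I _ _ (ExtColonAux.range_d10 A I) (ExtColonAux.range_d21 A I),
    ExtColonAux.colon_aux I hreg]
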